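/- Let p > 1, q = p/(p−1), c_p = (p−1)/(2p−1). Let R > 0, let P : [0,R] → (0,∞) be non-increasing and absolutely continuous, let f : [0,R] → [0,∞) be continuous, non-increasing, not identically 0, and set μ_f(t) = ∫_t^R f(s)P(s) ds. Then ∫_0^R μ_f(t)^q / P(t)^{1/(p−1)} dt ≥ c_p · μ_f(0)^{q+1} / (f(0) · P(0)^q). -/

import Mathlib

theorem stmt9 (p : ℝ) (hp : 1 < p) (q cp : ℝ) (hq : q = p / (p - 1))
    (hcp : cp = (p - 1) / (2 * p - 1))
    (R : ℝ) (hR : 0 < R) (P f : ℝ → ℝ)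
    (hPpos : ∀ t ∈ Set.Icc 0 R, 0 < P t) (hPmono : AntitoneOn P (Set.Icc 0 R))
    (hPac : ∀ t ∈ Set.Icc (0 : ℝ) R, P t = P 0 + ∫ s in (0 : ℝ)..t, deriv P s)
    (hfcont : ContinuousOn f (Set.Icc 0 R)) (hfmono : AntitoneOn f (Set.Icc 0 R))
    (hfnonneg : ∀ t ∈ Set.Icc 0 R, 0 ≤ f t)
    (hfne : ∃ t ∈ Set.Icc (0 : ℝ) R, f t ≠ 0)
    (μf : ℝ → ℝ) (hμf : ∀ t, μf t = ∫ s in t..R, f s * P s) :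
    cp * (μf 0) ^ (q + 1) / (f 0 * (P 0) ^ q) ≤
      ∫ t in (0 : ℝ)..R, (μf t) ^ q / (P t) ^ (1 / (p - 1)) := by
  have hp1 : (0:ℝ) < p - 1 := by linarith
  set r : ℝ := 1 / (p - 1) with hr_def
  have hr : 0 < r := by positivity
  have hqr : q = 1 + r := by
    rw [hq, hr_def]; field_simp; ring
  have hqpos : 0 < q := by rw [hqr]; linarith
  have hq1 : 1 ≤ q + 1 := by linarith
  have h0R : (0:ℝ) ∈ Set.Icc 0 R := ⟨le_refl _, hR.le⟩
  -- f 0 > 0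
  obtain ⟨t0, ht0, hft0⟩ := hfne
  have hf0pos : 0 < f 0 :=
    lt_of_lt_of_le (lt_of_le_of_ne (hfnonneg _ ht0) (Ne.symm hft0)) (hfmono h0R ht0 ht0.1)
  have hP0pos : 0 < P 0 := hPpos 0 h0R
  set A : ℝ := f 0 * P 0 with hA_def
  have hApos : 0 < A := mul_pos hf0pos hP0pos
  -- f*P antitone on Icc 0 R
  have hfP : AntitoneOn (fun t => f t * P t) (Set.Icc 0 R) := fun a ha b hb hab =>
    mul_le_mul (hfmono ha hb hab) (hPmono ha hb hab) (hPpos b hb).le (hfnonneg a ha)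
  have hint : ∀ a b, a ∈ Set.Icc 0 R → b ∈ Set.Icc 0 R →
      IntervalIntegrable (fun t => f t * P t) MeasureTheory.volume a b := fun a b ha hb =>
    (hfP.mono (Set.uIcc_subset_Icc ha hb)).intervalIntegrable
  -- μf nonneg
  have hμnonneg : ∀ t ∈ Set.Icc 0 R, 0 ≤ μf t := by
    intro t ht
    rw [hμf]
    refine intervalIntegral.integral_nonneg ht.2 (fun u hu => ?_)
    have hu' : u ∈ Set.Icc 0 R := ⟨le_trans ht.1 hu.1, hu.2⟩
    exact mul_nonneg (hfnonneg u hu') (hPpos u hu').le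
  -- pointwise bound f s * P s ≤ A on Icc 0 R
  have hfPle : ∀ s ∈ Set.Icc 0 R, f s * P s ≤ A := fun s hs => hfP h0R hs hs.1
  -- μf 0 = ∫_0^t + μf t and ∫_0^t ≤ A t
  have hsplit : ∀ t ∈ Set.Icc 0 R, μf 0 = (∫ s in (0:ℝ)..t, f s * P s) + μf t := by
    intro t ht
    rw [hμf, hμf]
    exact (intervalIntegral.integral_add_adjacent_intervals (hint 0 t h0R ht)
      (hint t R ht ⟨hR.le, le_refl _⟩)).symm
  have hintle : ∀ t ∈ Set.Icc 0 R, (∫ s in (0:ℝ)..t, f s * P s) ≤ A * t := by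
    intro t ht
    calc (∫ s in (0:ℝ)..t, f s * P s) ≤ ∫ _ in (0:ℝ)..t, A := by
          refine intervalIntegral.integral_mono_on ht.1 (hint 0 t h0R ht)
            intervalIntegrable_const (fun s hs => hfPle s ⟨hs.1, le_trans hs.2 ht.2⟩)
      _ = A * t := by simp [hA_def]; ring
  have hμlb : ∀ t ∈ Set.Icc 0 R, μf 0 - A * t ≤ μf t := by
    intro t ht
    have := hsplit t ht
    have := hintle t ht
    linarith
  have hμ0le : μf 0 ≤ A * R := by
    have h1 := hsplit R ⟨hR.le, le_refl _⟩
    have h2 := hintle R ⟨hR.le, le_refl _⟩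
    have h3 : μf R = 0 := by rw [hμf]; simp
    linarith
  set T : ℝ := μf 0 / A with hT_def
  have hμ0nonneg : 0 ≤ μf 0 := hμnonneg 0 h0R
  have hT0 : 0 ≤ T := div_nonneg hμ0nonneg hApos.le
  have hTR : T ≤ R := (div_le_iff₀ hApos).2 (by linarith [hμ0le])
  have hTIcc : T ∈ Set.Icc 0 R := ⟨hT0, hTR⟩
  have hAT : μf 0 - A * T = 0 := by
    rw [hT_def]; field_simp; ring
  -- integrability of the integrand on [0,R]
  have hμcont : ContinuousOn μf (Set.Icc 0 R) := by
    have h_int : MeasureTheory.IntegrableOn (fun t => f t * P t) (Set.uIcc 0 R)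
        MeasureTheory.volume := by
      rw [Set.uIcc_of_le hR.le]
      exact (intervalIntegrable_iff_integrableOn_Icc_of_le hR.le).1
        (hint 0 R h0R ⟨hR.le, le_refl _⟩)
    have := intervalIntegral.continuousOn_primitive_interval_left h_int
    rw [Set.uIcc_of_le hR.le] at this
    exact ContinuousOn.congr this (fun t _ => hμf t)
  have hμqcont : ContinuousOn (fun t => μf t ^ q) (Set.Icc 0 R) :=
    hμcont.rpow_const (fun t _ => Or.inr hqpos.le)
  have hPinv_mono : MonotoneOn (fun t => (P t ^ r)⁻¹) (Set.Icc 0 R) := by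
    intro a ha b hb hab
    have hpb : 0 < P b ^ r := Real.rpow_pos_of_pos (hPpos b hb) r
    have : P b ^ r ≤ P a ^ r :=
      Real.rpow_le_rpow (hPpos b hb).le (hPmono ha hb hab) hr.le
    exact inv_anti₀ hpb this
  have hintegrand_int : ∀ a b, a ∈ Set.Icc 0 R → b ∈ Set.Icc 0 R →
      IntervalIntegrable (fun t => μf t ^ q / P t ^ r) MeasureTheory.volume a b := by
    intro a b ha hb
    have h1 : IntervalIntegrable (fun t => (P t ^ r)⁻¹) MeasureTheory.volume a b :=
      (hPinv_mono.mono (Set.uIcc_subset_Icc ha hb)).intervalIntegrable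
    have h2 : ContinuousOn (fun t => μf t ^ q) (Set.uIcc a b) :=
      hμqcont.mono (Set.uIcc_subset_Icc ha hb)
    simpa [div_eq_mul_inv] using h1.continuousOn_mul h2
  -- integrand nonneg
  have hintegrand_nonneg : ∀ t ∈ Set.Icc 0 R, 0 ≤ μf t ^ q / P t ^ r := by
    intro t ht
    exact div_nonneg (Real.rpow_nonneg (hμnonneg t ht) q)
      (Real.rpow_nonneg (hPpos t ht).le r)
  -- FTC computation of the comparison integral
  have hFTC : (∫ t in (0:ℝ)..T, (μf 0 - A * t) ^ q) = μf 0 ^ (q + 1) / (A * (q + 1)) := by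
    have hq1ne : q + 1 ≠ 0 := by positivity
    have hAne : A ≠ 0 := hApos.ne'
    have hderiv : ∀ t : ℝ, HasDerivAt (fun t => -(A * (q + 1))⁻¹ * (μf 0 - A * t) ^ (q + 1))
        ((μf 0 - A * t) ^ q) t := by
      intro t
      have hinner : HasDerivAt (fun t : ℝ => μf 0 - A * t) (-A) t := by
        simpa using ((hasDerivAt_id t).const_mul A).const_sub (μf 0)
      have houter : HasDerivAt (fun x : ℝ => x ^ (q + 1))
          ((q + 1) * (μf 0 - A * t) ^ (q + 1 - 1)) (μf 0 - A * t) :=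
        Real.hasDerivAt_rpow_const (Or.inr hq1)
      have := (houter.comp t hinner).const_mul (-(A * (q + 1))⁻¹)
      refine this.congr_deriv ?_
      have : q + 1 - 1 = q := by ring
      rw [this]
      field_simp
    have hcont : ContinuousOn (fun t => (μf 0 - A * t) ^ q) (Set.uIcc 0 T) := by
      apply ContinuousOn.rpow_const
      · exact (continuousOn_const.sub (continuousOn_const.mul continuousOn_id))
      · exact fun t _ => Or.inr hqpos.le
    rw [intervalIntegral.integral_eq_sub_of_hasDerivAt (fun t _ => hderiv t)
      hcont.intervalIntegrable]
    · rw [hAT, Real.zero_rpow hq1ne]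
      have : μf 0 - A * 0 = μf 0 := by ring
      rw [this]
      field_simp
      ring
  -- comparison step on [0,T]
  have hcomp_cont : ContinuousOn (fun t => (μf 0 - A * t) ^ q / P 0 ^ r) (Set.uIcc 0 T) :=
    ((continuousOn_const.sub (continuousOn_const.mul continuousOn_id)).rpow_const
      (fun t _ => Or.inr hqpos.le)).div_const _
  have hstep1 : (∫ t in (0:ℝ)..T, (μf 0 - A * t) ^ q / P 0 ^ r) ≤
      ∫ t in (0:ℝ)..T, μf t ^ q / P t ^ r := by
    refine intervalIntegral.integral_mono_on hT0 hcomp_cont.intervalIntegrable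
      (hintegrand_int 0 T h0R hTIcc) ?_
    intro t ht
    have ht' : t ∈ Set.Icc 0 R := ⟨ht.1, le_trans ht.2 hTR⟩
    have hAt : A * t ≤ μf 0 := by
      have := (le_div_iff₀ hApos).1 ht.2
      linarith
    have h1 : 0 ≤ μf 0 - A * t := by linarith
    exact div_le_div₀ (Real.rpow_nonneg (hμnonneg t ht') q)
      (Real.rpow_le_rpow h1 (hμlb t ht') hqpos.le)
      (Real.rpow_pos_of_pos (hPpos t ht') r)
      (Real.rpow_le_rpow (hPpos t ht').le (hPmono h0R ht' ht'.1) hr.le)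
  have hstep2 : (∫ t in (0:ℝ)..T, μf t ^ q / P t ^ r) ≤ ∫ t in (0:ℝ)..R, μf t ^ q / P t ^ r := by
    have hadd := intervalIntegral.integral_add_adjacent_intervals
      (hintegrand_int 0 T h0R hTIcc) (hintegrand_int T R hTIcc ⟨hR.le, le_refl _⟩)
    have h2 : 0 ≤ ∫ t in T..R, μf t ^ q / P t ^ r :=
      intervalIntegral.integral_nonneg hTR
        (fun u hu => hintegrand_nonneg u ⟨le_trans hT0 hu.1, hu.2⟩)
    linarith
  -- final arithmetic
  have hQne : q + 1 ≠ 0 := by positivity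
  have hcpq : cp * (q + 1) = 1 := by
    rw [hcp, hq]
    have h2p : 2 * p - 1 ≠ 0 := by nlinarith
    have hp1' : p - 1 ≠ 0 := hp1.ne'
    rw [div_add_one hp1', div_mul_div_comm, div_eq_one_iff_eq (mul_ne_zero h2p hp1')]
    ring
  have hcp' : cp = 1 / (q + 1) := by
    field_simp
    linarith [hcpq]
  have hP0q : P 0 ^ q = P 0 * P 0 ^ r := by
    rw [hqr, Real.rpow_add hP0pos, Real.rpow_one]
  have hfinal : cp * μf 0 ^ (q + 1) / (f 0 * P 0 ^ q) =
      ∫ t in (0:ℝ)..T, (μf 0 - A * t) ^ q / P 0 ^ r := by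
    rw [intervalIntegral.integral_div, hFTC, hP0q, hA_def, hcp']
    have hc : P 0 ^ r ≠ 0 := (Real.rpow_pos_of_pos hP0pos r).ne'
    field_simp
  calc cp * μf 0 ^ (q + 1) / (f 0 * P 0 ^ q)
      = ∫ t in (0:ℝ)..T, (μf 0 - A * t) ^ q / P 0 ^ r := hfinal
    _ ≤ ∫ t in (0:ℝ)..T, μf t ^ q / P t ^ r := hstep1
    _ ≤ ∫ t in (0:ℝ)..R, μf t ^ q / P t ^ r := hstep2
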